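/- Let A be an n×n copositive matrix, let u be a zero of A with support I = Supp(u) of cardinality k, and set K = ℝ₊^k ∩ ker(A_I). Let v ∈ ℝ^n be a nonzero vector with Supp(v) ⊆ I. Then v is a minimal zero of A if and only if v_I is an extremal element of the cone K. -/

import Mathlib

open Matrix

/-- A symmetric matrix `A` is copositive if `xᵀ A x ≥ 0` for all entrywise nonnegative `x`. -/
def Copositive {n : ℕ} (A : Matrix (Fin n) (Fin n) ℝ) : Prop :=
  A.IsSymm ∧ ∀ x : Fin n → ℝ, (∀ i, 0 ≤ x i) → 0 ≤ x ⬝ᵥ A.mulVec x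

/-- The support of a vector. -/
def Supp {ι : Type*} (u : ι → ℝ) : Set ι := {i | u i ≠ 0}

/-- A zero of a copositive matrix: a nonzero nonnegative vector `u` with `uᵀ A u = 0`. -/
def IsZeroOf {n : ℕ} (A : Matrix (Fin n) (Fin n) ℝ) (u : Fin n → ℝ) : Prop :=
  u ≠ 0 ∧ (∀ i, 0 ≤ u i) ∧ u ⬝ᵥ A.mulVec u = 0

/-- A minimal zero: a zero such that no zero has support strictly contained in its support. -/
def IsMinimalZeroOf {n : ℕ} (A : Matrix (Fin n) (Fin n) ℝ) (u : Fin n → ℝ) : Prop :=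
  IsZeroOf A u ∧ ¬ ∃ v, IsZeroOf A v ∧ Supp v ⊂ Supp u

/-- The principal submatrix of `A` with rows and columns in `I`. -/
def subMat {n : ℕ} (A : Matrix (Fin n) (Fin n) ℝ) (I : Finset (Fin n)) :
    Matrix {i // i ∈ I} {i // i ∈ I} ℝ :=
  A.submatrix Subtype.val Subtype.val

/-- The subvector of `u` with indices in `I`. -/
def subVec {n : ℕ} (u : Fin n → ℝ) (I : Finset (Fin n)) : {i // i ∈ I} → ℝ :=
  fun i => u i.val

/-- Irreducibility of a copositive matrix `A` with respect to a set `M` of matrices. -/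
def IrreducibleWrtSet {n : ℕ} (A : Matrix (Fin n) (Fin n) ℝ)
    (M : Set (Matrix (Fin n) (Fin n) ℝ)) : Prop :=
  ¬ ∃ γ : ℝ, 0 < γ ∧ ∃ B ∈ M, B ≠ 0 ∧ Copositive (A - γ • B)

/-- Irreducibility of a copositive matrix `A` with respect to a single matrix `M`. -/
def IrreducibleWrtMat {n : ℕ} (A M : Matrix (Fin n) (Fin n) ℝ) : Prop :=
  ¬ ∃ γ : ℝ, 0 < γ ∧ Copositive (A - γ • M)

/-- An extremal element of a cone `K` of vectors. -/
def IsExtremalIn {ι : Type*} (K : Set (ι → ℝ)) (u : ι → ℝ) : Prop :=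
  u ∈ K ∧ u ≠ 0 ∧ ∀ v w, v ∈ K → w ∈ K → u = v + w →
    (∃ a : ℝ, 0 ≤ a ∧ v = a • u) ∧ (∃ b : ℝ, 0 ≤ b ∧ w = b • u)

/-- The matrix with entries 1 at positions `(i,j)` and `(j,i)` and 0 elsewhere. -/
def Eij {n : ℕ} (i j : Fin n) : Matrix (Fin n) (Fin n) ℝ :=
  fun a b => if (a = i ∧ b = j) ∨ (a = j ∧ b = i) then 1 else 0

namespace Stmt3Aux

variable {n : ℕ}

/-- Extend a vector on `I` by zero. -/
def extVec (I : Finset (Fin n)) (z : {i // i ∈ I} → ℝ) : Fin n → ℝ :=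
  fun i => if h : i ∈ I then z ⟨i, h⟩ else 0

lemma extVec_mem (I : Finset (Fin n)) (z : {i // i ∈ I} → ℝ) {i : Fin n} (h : i ∈ I) :
    extVec I z i = z ⟨i, h⟩ := dif_pos h

lemma extVec_not_mem (I : Finset (Fin n)) (z : {i // i ∈ I} → ℝ) {i : Fin n} (h : i ∉ I) :
    extVec I z i = 0 := dif_neg h

lemma subVec_extVec (I : Finset (Fin n)) (z : {i // i ∈ I} → ℝ) :
    subVec (extVec I z) I = z := by
  funext i
  simp only [subVec, extVec, dif_pos i.2]

lemma mulVec_restrict (A : Matrix (Fin n) (Fin n) ℝ) (I : Finset (Fin n))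
    (x : Fin n → ℝ) (hx : ∀ i ∉ I, x i = 0) (i : {i // i ∈ I}) :
    (subMat A I).mulVec (subVec x I) i = A.mulVec x i.val := by
  simp only [subMat, subVec, Matrix.mulVec, dotProduct, Matrix.submatrix_apply]
  rw [Finset.sum_coe_sort I (fun j => A i.val j * x j)]
  exact Finset.sum_subset (Finset.subset_univ I) (fun j _ hj => by rw [hx j hj, mul_zero])

lemma quad_restrict (A : Matrix (Fin n) (Fin n) ℝ) (I : Finset (Fin n))
    (x : Fin n → ℝ) (hx : ∀ i ∉ I, x i = 0) :
    x ⬝ᵥ A.mulVec x = subVec x I ⬝ᵥ (subMat A I).mulVec (subVec x I) := by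
  simp only [dotProduct]
  calc ∑ i, x i * (A.mulVec x) i
      = ∑ i ∈ I, x i * (A.mulVec x) i :=
        (Finset.sum_subset (Finset.subset_univ I)
          (fun j _ hj => by rw [hx j hj, zero_mul])).symm
    _ = ∑ i : {i // i ∈ I}, x i.val * (A.mulVec x) i.val :=
        (Finset.sum_coe_sort I (fun j => x j * A.mulVec x j)).symm
    _ = ∑ i : {i // i ∈ I}, subVec x I i * ((subMat A I).mulVec (subVec x I)) i :=
        Finset.sum_congr rfl (fun i _ => by rw [mulVec_restrict A I x hx i]; rfl)

lemma psd_subMat (A : Matrix (Fin n) (Fin n) ℝ) (hA : Copositive A)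
    (u : Fin n → ℝ) (hu : IsZeroOf A u) (I : Finset (Fin n))
    (hI : (I : Set (Fin n)) = Supp u) : (subMat A I).PosSemidef := by
  have hmem : ∀ i : Fin n, i ∈ I ↔ u i ≠ 0 := fun i => by
    rw [← Finset.mem_coe, hI]; rfl
  have hu_off : ∀ i ∉ I, u i = 0 := fun i hi => by
    by_contra h; exact hi ((hmem i).mpr h)
  set w : {i // i ∈ I} → ℝ := subVec u I with hwdef
  have hw : ∀ i : {i // i ∈ I}, 0 < w i := fun i =>
    lt_of_le_of_ne (hu.2.1 i.val) (Ne.symm ((hmem i.val).mp i.2))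
  rw [Matrix.posSemidef_iff_dotProduct_mulVec]
  constructor
  · -- Hermitian
    apply Matrix.ext; intro i j
    simp only [Matrix.conjTranspose_apply, subMat, Matrix.submatrix_apply, star_trivial]
    exact hA.1.apply i.val j.val
  · intro y
    have hstar : star y = y := funext fun i => star_trivial _
    rw [hstar]
    by_cases hne : Nonempty {i // i ∈ I}
    · haveI := hne
      set δ : ℝ := Finset.univ.inf' Finset.univ_nonempty (fun i => w i / (|y i| + 1))
        with hδdef
      have hδpos : 0 < δ := by
        rw [hδdef, Finset.lt_inf'_iff]
        exact fun i _ => div_pos (hw i) (by positivity)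
      have hδle : ∀ i, δ * |y i| ≤ w i := by
        intro i
        have h1 : δ ≤ w i / (|y i| + 1) := Finset.inf'_le _ (Finset.mem_univ i)
        have h2 : (0:ℝ) < |y i| + 1 := by positivity
        have h3 : δ * (|y i| + 1) ≤ w i := (le_div_iff₀ h2).mp h1
        nlinarith [abs_nonneg (y i), hδpos.le]
      have key : ∀ ε : ℝ, (∀ i : {i // i ∈ I}, 0 ≤ w i + ε * y i) →
          0 ≤ (fun i => w i + ε * y i) ⬝ᵥ (subMat A I).mulVec (fun i => w i + ε * y i) := by
        intro ε hε
        set x : Fin n → ℝ := fun i => if h : i ∈ I then w ⟨i, h⟩ + ε * y ⟨i, h⟩ else 0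
          with hxdef
        have hx_off : ∀ i ∉ I, x i = 0 := fun i hi => dif_neg hi
        have hx_nn : ∀ i, 0 ≤ x i := by
          intro i
          by_cases h : i ∈ I
          · rw [hxdef]; simp only [dif_pos h]; exact hε ⟨i, h⟩
          · rw [hx_off i h]
        have hsub : subVec x I = fun i => w i + ε * y i := by
          funext i
          simp only [subVec, hxdef, dif_pos i.2]
        have := hA.2 x hx_nn
        rwa [quad_restrict A I x hx_off, hsub] at this
      have hεp : ∀ i : {i // i ∈ I}, 0 ≤ w i + δ * y i := by
        intro i
        have := hδle i
        have := neg_abs_le (y i)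
        nlinarith [hδpos.le]
      have hεm : ∀ i : {i // i ∈ I}, 0 ≤ w i + (-δ) * y i := by
        intro i
        have := hδle i
        have := le_abs_self (y i)
        nlinarith [hδpos.le]
      have h0 : w ⬝ᵥ (subMat A I).mulVec w = 0 := by
        rw [hwdef, ← quad_restrict A I u hu_off]; exact hu.2.2
      have expand : ∀ ε : ℝ, (fun i => w i + ε * y i) ⬝ᵥ (subMat A I).mulVec
          (fun i => w i + ε * y i) =
          w ⬝ᵥ (subMat A I).mulVec w + ε * (y ⬝ᵥ (subMat A I).mulVec w)
          + ε * (w ⬝ᵥ (subMat A I).mulVec y) + ε^2 * (y ⬝ᵥ (subMat A I).mulVec y) := by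
        intro ε
        have h1 : (fun i => w i + ε * y i) = w + ε • y := by
          funext i; simp [Pi.add_apply, Pi.smul_apply, smul_eq_mul]
        rw [h1]
        simp only [Matrix.mulVec_add, Matrix.mulVec_smul, dotProduct_add,
          add_dotProduct, dotProduct_smul, smul_dotProduct, smul_eq_mul]
        ring
      have hp := key δ hεp
      have hm := key (-δ) hεm
      rw [expand δ] at hp
      rw [expand (-δ)] at hm
      nlinarith [mul_pos hδpos hδpos]
    · haveI := not_nonempty_iff.mp hne
      simp [dotProduct]

lemma ker_of_quad (A : Matrix (Fin n) (Fin n) ℝ) (I : Finset (Fin n))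
    (hpsd : (subMat A I).PosSemidef) (x : Fin n → ℝ)
    (hx : ∀ i ∉ I, x i = 0) (hq : x ⬝ᵥ A.mulVec x = 0) :
    (subMat A I).mulVec (subVec x I) = 0 := by
  apply (hpsd.dotProduct_mulVec_zero_iff (subVec x I)).mp
  have hstar : star (subVec x I) = subVec x I := funext fun i => star_trivial _
  rw [hstar]
  rw [← quad_restrict A I x hx]
  exact hq

end Stmt3Aux

theorem stmt3 {n : ℕ} (A : Matrix (Fin n) (Fin n) ℝ) (hA : Copositive A)
    (u : Fin n → ℝ) (hu : IsZeroOf A u)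
    (I : Finset (Fin n)) (hI : (I : Set (Fin n)) = Supp u)
    (K : Set ({i // i ∈ I} → ℝ))
    (hK : K = {x | (∀ i, 0 ≤ x i) ∧ (subMat A I).mulVec x = 0})
    (v : Fin n → ℝ) (hv0 : v ≠ 0) (hvI : Supp v ⊆ (I : Set (Fin n))) :
    IsMinimalZeroOf A v ↔ IsExtremalIn K (subVec v I) := by
  have hv_off : ∀ i ∉ I, v i = 0 := fun i hi => by
    by_contra h
    exact hi (Finset.mem_coe.mp (hvI h))
  have hpsd := Stmt3Aux.psd_subMat A hA u hu I hI
  have hvIne : subVec v I ≠ 0 := by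
    intro h
    apply hv0
    funext i
    by_cases hi : i ∈ I
    · exact congrFun h ⟨i, hi⟩
    · exact hv_off i hi
  constructor
  · rintro ⟨⟨hvne, hvnn, hvq⟩, hnomin⟩
    have hker : (subMat A I).mulVec (subVec v I) = 0 :=
      Stmt3Aux.ker_of_quad A I hpsd v hv_off hvq
    refine ⟨?_, hvIne, ?_⟩
    · rw [hK]; exact ⟨fun i => hvnn i.val, hker⟩
    · intro p q hp hq hsum
      rw [hK] at hp hq
      obtain ⟨hpnn, hpker⟩ := hp
      obtain ⟨hqnn, hqker⟩ := hq
      by_cases hp0 : p = 0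
      · refine ⟨⟨0, le_refl 0, by rw [hp0, zero_smul]⟩, ⟨1, zero_le_one, ?_⟩⟩
        rw [one_smul, hsum, hp0, zero_add]
      have hple : ∀ i, p i ≤ v i.val := by
        intro i
        have h := congrFun hsum i
        simp only [Pi.add_apply, subVec] at h
        have := hqnn i
        linarith
      obtain ⟨i₁, hi₁⟩ := Function.ne_iff.mp hp0
      set S := Finset.univ.filter (fun i : {i // i ∈ I} => p i ≠ 0) with hSdef
      have hS : S.Nonempty := ⟨i₁, by simp only [hSdef, Finset.mem_filter, Finset.mem_univ, true_and]; simpa using hi₁⟩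
      have hppos : ∀ i ∈ S, 0 < p i := fun i hi =>
        lt_of_le_of_ne (hpnn i) (Ne.symm (by simpa [hSdef] using hi))
      set α : ℝ := S.inf' hS (fun i => v i.val / p i) with hαdef
      have hα1 : 1 ≤ α := by
        rw [hαdef, Finset.le_inf'_iff]
        intro i hi
        exact (one_le_div (hppos i hi)).mpr (hple i)
      have hαpos : 0 < α := lt_of_lt_of_le one_pos hα1
      have hαle : ∀ i : {i // i ∈ I}, α * p i ≤ v i.val := by
        intro i
        by_cases hi : p i = 0
        · rw [hi, mul_zero]; exact le_trans (hpnn i) (hple i)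
        · have hiS : i ∈ S := by simp [hSdef, hi]
          have h1 := Finset.inf'_le (fun i => v i.val / p i) hiS
          calc α * p i ≤ (v i.val / p i) * p i :=
                mul_le_mul_of_nonneg_right h1 (hpnn i)
            _ = v i.val := div_mul_cancel₀ _ hi
      set r : Fin n → ℝ := v - α • Stmt3Aux.extVec I p with hrdef
      have hr_off : ∀ i ∉ I, r i = 0 := by
        intro i hi
        simp [hrdef, hv_off i hi, Stmt3Aux.extVec_not_mem I p hi]
      have hr_val : ∀ (i : Fin n) (hi : i ∈ I), r i = v i - α * p ⟨i, hi⟩ := by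
        intro i hi
        simp [hrdef, Stmt3Aux.extVec_mem I p hi]
      have hr_nn : ∀ i, 0 ≤ r i := by
        intro i
        by_cases hi : i ∈ I
        · rw [hr_val i hi]
          have := hαle ⟨i, hi⟩
          linarith
        · rw [hr_off i hi]
      have hsubr : subVec r I = subVec v I - α • p := by
        funext i
        have := hr_val i.val i.2
        simpa [subVec] using this
      have hrker : (subMat A I).mulVec (subVec r I) = 0 := by
        rw [hsubr, Matrix.mulVec_sub, Matrix.mulVec_smul, hker, hpker, smul_zero,
          sub_zero]
      have hrq : r ⬝ᵥ A.mulVec r = 0 := by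
        rw [Stmt3Aux.quad_restrict A I r hr_off, hrker, dotProduct_zero]
      obtain ⟨i₀, hi₀S, hi₀⟩ := Finset.exists_mem_eq_inf' hS (fun i => v i.val / p i)
      have hpi₀ : p i₀ ≠ 0 := ne_of_gt (hppos i₀ hi₀S)
      have hri₀ : r i₀.val = 0 := by
        rw [hr_val i₀.val i₀.2]
        have : (⟨i₀.val, i₀.2⟩ : {i // i ∈ I}) = i₀ := rfl
        rw [this, hαdef, hi₀, div_mul_cancel₀ _ hpi₀, sub_self]
      have hvi₀ : v i₀.val ≠ 0 := ne_of_gt (lt_of_lt_of_le (hppos i₀ hi₀S) (hple i₀))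
      have hr0 : r = 0 := by
        by_contra hrne
        apply hnomin
        refine ⟨r, ⟨hrne, hr_nn, hrq⟩, ?_, ?_⟩
        · intro i hi
          by_contra hvi
          have hvi' : v i = 0 := not_not.mp hvi
          apply hi
          by_cases hiI : i ∈ I
          · have hpq := congrFun hsum ⟨i, hiI⟩
            simp only [Pi.add_apply, subVec] at hpq
            have hp' : p ⟨i, hiI⟩ = 0 := by
              have := hpnn ⟨i, hiI⟩
              have := hqnn ⟨i, hiI⟩
              rw [hvi'] at hpq
              linarith
            show r i = 0
            rw [hr_val i hiI, hp', mul_zero, hvi', sub_zero]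
          · show r i = 0
            exact hr_off i hiI
        · intro hsupvr
          exact (hsupvr hvi₀) hri₀
      have hveq : ∀ i : {i // i ∈ I}, v i.val = α * p i := by
        intro i
        have h := congrFun hr0 i.val
        rw [hr_val i.val i.2] at h
        simp only [Pi.zero_apply] at h
        have : (⟨i.val, i.2⟩ : {i // i ∈ I}) = i := rfl
        rw [this] at h
        linarith
      have hαne : α ≠ 0 := ne_of_gt hαpos
      refine ⟨⟨α⁻¹, inv_nonneg.mpr hαpos.le, ?_⟩, ⟨1 - α⁻¹, ?_, ?_⟩⟩
      · funext i
        simp only [Pi.smul_apply, smul_eq_mul, subVec]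
        rw [hveq i]
        field_simp
      · have h1 : α⁻¹ ≤ 1 := by
          rw [inv_le_one_iff₀]
          right; exact hα1
        linarith
      · funext i
        have hpq := congrFun hsum i
        simp only [Pi.add_apply] at hpq
        have hpi : p i = α⁻¹ * v i.val := by
          rw [hveq i]; field_simp
        simp only [Pi.smul_apply, smul_eq_mul, subVec] at hpq ⊢
        rw [show q i = v i.val - p i by linarith, hpi]
        ring
  · rintro ⟨hmem, hne, hextr⟩
    rw [hK] at hmem
    obtain ⟨hVnn, hVker⟩ := hmem
    have hvnn : ∀ i, 0 ≤ v i := by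
      intro i
      by_cases hi : i ∈ I
      · exact hVnn ⟨i, hi⟩
      · rw [hv_off i hi]
    have hvq : v ⬝ᵥ A.mulVec v = 0 := by
      rw [Stmt3Aux.quad_restrict A I v hv_off, hVker, dotProduct_zero]
    refine ⟨⟨hv0, hvnn, hvq⟩, ?_⟩
    rintro ⟨z, ⟨hz0, hznn, hzq⟩, hzsub⟩
    have hz_supp : Supp z ⊆ Supp v := hzsub.1
    have hz_off : ∀ i ∉ I, z i = 0 := fun i hi => by
      by_contra h
      exact hi (Finset.mem_coe.mp (hvI (hz_supp h)))
    have hzker := Stmt3Aux.ker_of_quad A I hpsd z hz_off hzq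
    have hzIne : subVec z I ≠ 0 := by
      intro h
      apply hz0
      funext i
      by_cases hi : i ∈ I
      · exact congrFun h ⟨i, hi⟩
      · exact hz_off i hi
    obtain ⟨i₁, hi₁⟩ := Function.ne_iff.mp hzIne
    set S := Finset.univ.filter (fun i : {i // i ∈ I} => subVec z I i ≠ 0) with hSdef
    have hS : S.Nonempty := ⟨i₁, by simp only [hSdef, Finset.mem_filter, Finset.mem_univ, true_and]; simpa using hi₁⟩
    have hzpos : ∀ i ∈ S, 0 < z i.val := fun i hi =>
      lt_of_le_of_ne (hznn i.val) (Ne.symm (by rw [hSdef] at hi; exact (Finset.mem_filter.mp hi).2))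
    have hvpos : ∀ i ∈ S, 0 < v i.val := by
      intro i hi
      have hzi : z i.val ≠ 0 := ne_of_gt (hzpos i hi)
      have : v i.val ≠ 0 := hz_supp hzi
      exact lt_of_le_of_ne (hvnn i.val) (Ne.symm this)
    set α : ℝ := S.inf' hS (fun i => v i.val / z i.val) with hαdef
    have hαpos : 0 < α := by
      rw [hαdef, Finset.lt_inf'_iff]
      exact fun i hi => div_pos (hvpos i hi) (hzpos i hi)
    have hαle : ∀ i : {i // i ∈ I}, α * z i.val ≤ v i.val := by
      intro i
      by_cases hi : z i.val = 0
      · rw [hi, mul_zero]; exact hvnn i.val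
      · have hiS : i ∈ S := by rw [hSdef, Finset.mem_filter]; exact ⟨Finset.mem_univ _, hi⟩
        have h1 := Finset.inf'_le (fun i => v i.val / z i.val) hiS
        calc α * z i.val ≤ (v i.val / z i.val) * z i.val :=
              mul_le_mul_of_nonneg_right h1 (hznn i.val)
          _ = v i.val := div_mul_cancel₀ _ hi
    have hpK : α • subVec z I ∈ K := by
      rw [hK]
      refine ⟨fun i => ?_, ?_⟩
      · exact mul_nonneg hαpos.le (hznn i.val)
      · rw [Matrix.mulVec_smul, hzker, smul_zero]
    have hqK : subVec v I - α • subVec z I ∈ K := by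
      rw [hK]
      refine ⟨fun i => ?_, ?_⟩
      · have := hαle i
        simp only [Pi.sub_apply, Pi.smul_apply, smul_eq_mul, subVec]
        linarith
      · rw [Matrix.mulVec_sub, Matrix.mulVec_smul, hVker, hzker, smul_zero, sub_zero]
    have hsum : subVec v I = α • subVec z I + (subVec v I - α • subVec z I) := by
      ring_nf
    obtain ⟨⟨a, ha, hpa⟩, -⟩ := hextr _ _ hpK hqK hsum
    have hane : a ≠ 0 := by
      intro h
      rw [h, zero_smul] at hpa
      have := smul_eq_zero.mp hpa
      rcases this with h' | h'
      · exact ne_of_gt hαpos h'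
      · exact hzIne h'
    obtain ⟨j, hjv, hjz⟩ := Set.exists_of_ssubset hzsub
    have hjI : j ∈ I := Finset.mem_coe.mp (hvI hjv)
    have hjz' : z j = 0 := not_not.mp hjz
    have hcontra := congrFun hpa ⟨j, hjI⟩
    simp only [Pi.smul_apply, smul_eq_mul, subVec, hjz', mul_zero] at hcontra
    have : a * v j = 0 := hcontra.symm
    rcases mul_eq_zero.mp this with h' | h'
    · exact hane h'
    · exact hjv h'
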